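/- arXiv:2203.05298 — 2 statements merged into one kernel-verified Lean document; each statement's English description precedes it below -/
import Mathlib

section
/- Let G be a signed digraph on a finite vertex set V with |V| = n and without negative cycles, and let f be a Boolean network on G. The following conditions are equivalent: (1) f has exactly one fixed point; (2) f has a synchronizing word of length n; (3) f is synchronizing. -/
/-- A signed digraph on vertex set `V`, given by its positive and negative arc relations. -/
structure SignedDigraph (V : Type*) where
  pos : V → V → Prop
  neg : V → V → Prop

/-- The last vertex of a walk starting at `u` with the given steps. -/
def walkEnd {V : Type*} (u : V) (steps : List (V × Bool)) : V :=
  (steps.map Prod.fst).getLastD u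

/-- The sign of a walk (`true` = positive): positive iff the number of
negative (`false`) arcs is even. -/
def walkSign {V : Type*} (steps : List (V × Bool)) : Bool :=
  steps.foldl (fun acc step => acc == step.2) true

namespace SignedDigraph

variable {V : Type*}

/-- Arc of the underlying digraph. -/
def Arc (G : SignedDigraph V) (j i : V) : Prop := G.pos j i ∨ G.neg j i

/-- `G.IsWalk u steps`: `steps` is a list of (next vertex, sign of arc) pairs
describing a walk in `G` starting at `u`. -/
def IsWalk (G : SignedDigraph V) : V → List (V × Bool) → Prop
  | _, [] => True
  | u, step :: rest =>
      (if step.2 then G.pos u step.1 else G.neg u step.1) ∧ G.IsWalk step.1 rest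

/-- A (simple) path from `u`: a walk with pairwise distinct vertices. -/
def IsPath (G : SignedDigraph V) (u : V) (steps : List (V × Bool)) : Prop :=
  G.IsWalk u steps ∧ (u :: steps.map Prod.fst).Nodup

/-- A (simple) path from `u` to `v`. -/
def IsPathFrom (G : SignedDigraph V) (u : V) (steps : List (V × Bool)) (v : V) : Prop :=
  G.IsPath u steps ∧ walkEnd u steps = v

/-- A cycle through `u`: a nonempty closed walk from `u` back to `u` with no repeated
vertex except the endpoint. -/
def IsCycle (G : SignedDigraph V) (u : V) (steps : List (V × Bool)) : Prop :=
  steps ≠ [] ∧ G.IsWalk u steps ∧ walkEnd u steps = u ∧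
    (u :: (steps.map Prod.fst).dropLast).Nodup

/-- `G` has no positive cycle. -/
def NoPositiveCycle (G : SignedDigraph V) : Prop :=
  ∀ u steps, G.IsCycle u steps → walkSign steps = false

/-- `G` has no negative cycle. -/
def NoNegativeCycle (G : SignedDigraph V) : Prop :=
  ∀ u steps, G.IsCycle u steps → walkSign steps = true

/-- Reachability in the underlying digraph. -/
def Reach (G : SignedDigraph V) (u v : V) : Prop :=
  ∃ steps, G.IsWalk u steps ∧ walkEnd u steps = v

/-- The underlying digraph of `G` is strongly connected. -/
def StronglyConnected (G : SignedDigraph V) : Prop := ∀ u v, G.Reach u v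

/-- `u` and `v` lie in the same strong component. -/
def SameComp (G : SignedDigraph V) (u v : V) : Prop := G.Reach u v ∧ G.Reach v u

/-- The strong component of `u`. -/
def comp (G : SignedDigraph V) (u : V) : Set V := {v | G.SameComp u v}

/-- The in-degree of `i`: the number of arcs (with their signs) entering `i`. -/
noncomputable def inDegree (G : SignedDigraph V) (i : V) : ℕ :=
  {j | G.pos j i}.ncard + {j | G.neg j i}.ncard

/-- A source: a vertex with no in-coming arc. -/
def IsSource (G : SignedDigraph V) (i : V) : Prop := ∀ j, ¬ G.Arc j i

/-- `G` has no sources. -/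
def NoSource (G : SignedDigraph V) : Prop := ∀ i, ¬ G.IsSource i

/-- The subgraph induced on a set `S` of vertices. -/
def induce (G : SignedDigraph V) (S : Set V) : SignedDigraph V where
  pos j i := j ∈ S ∧ i ∈ S ∧ G.pos j i
  neg j i := j ∈ S ∧ i ∈ S ∧ G.neg j i

/-- The underlying digraph of `G` restricted to `S` is a cycle: `S` is nonempty,
every vertex of `S` has exactly one in-coming arc inside `S`, and `S` is strongly
connected inside `S`. -/
def IsCycleGraphOn (G : SignedDigraph V) (S : Set V) : Prop :=
  S.Nonempty ∧ (∀ i ∈ S, (G.induce S).inDegree i = 1) ∧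
    ∀ u ∈ S, ∀ v ∈ S, (G.induce S).Reach u v

/-- The underlying digraph of `G` is a cycle. -/
def IsCycleGraph (G : SignedDigraph V) : Prop := G.IsCycleGraphOn Set.univ

/-- `S` is an initial strong component of `G`. -/
def IsInitialComponent (G : SignedDigraph V) (S : Set V) : Prop :=
  (∃ u, S = G.comp u) ∧ ∀ j i, i ∈ S → G.Arc j i → j ∈ S

/-- `G` has an initial cycle: an initial strong component whose underlying digraph
is a cycle. -/
def HasInitialCycle (G : SignedDigraph V) : Prop :=
  ∃ S : Set V, G.IsInitialComponent S ∧ G.IsCycleGraphOn S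

/-- A forward path: a nonempty path whose last arc joins two distinct strong
components. -/
def IsForwardPath (G : SignedDigraph V) (u : V) (steps : List (V × Bool)) (v : V) : Prop :=
  G.IsPathFrom u steps v ∧ steps ≠ [] ∧ ¬ G.SameComp (walkEnd u steps.dropLast) v

/-- `G` is `i`-homogenous: every strong component contains a vertex `j` such that
all forward paths from `j` to `i` have the same sign. -/
def IsHomogenousAt (G : SignedDigraph V) (i : V) : Prop :=
  ∀ u : V, ∃ j, G.SameComp u j ∧
    ∀ steps₁ steps₂, G.IsForwardPath j steps₁ i → G.IsForwardPath j steps₂ i →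
      walkSign steps₁ = walkSign steps₂

/-- `G` is homogenous. -/
def IsHomogenous (G : SignedDigraph V) : Prop := ∀ i, G.IsHomogenousAt i

/-- `G` is simple: no pair of parallel arcs of opposite signs. -/
def IsSimple (G : SignedDigraph V) : Prop := ∀ j i, ¬ (G.pos j i ∧ G.neg j i)

end SignedDigraph

section BooleanNetwork

variable {V : Type*} [DecidableEq V]

/-- Asynchronous update of component `i` of the Boolean network `f`. -/
def localUpdate (f : (V → Bool) → V → Bool) (i : V) (x : V → Bool) : V → Bool :=
  Function.update x i (f x i)

/-- `f^w` : for `w = i₁,…,i_ℓ`, `wordUpdate f w = f^{i_ℓ} ∘ ⋯ ∘ f^{i₁}`. -/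
def wordUpdate (f : (V → Bool) → V → Bool) (w : List V) (x : V → Bool) : V → Bool :=
  w.foldl (fun y i => localUpdate f i y) x

/-- `w` is a synchronizing word for `f`: `f^w` is constant. -/
def SyncWord (f : (V → Bool) → V → Bool) (w : List V) : Prop :=
  ∃ c : V → Bool, ∀ x, wordUpdate f w x = c

/-- `f` is synchronizing. -/
def Synchronizing (f : (V → Bool) → V → Bool) : Prop := ∃ w, SyncWord f w

/-- Positive arc of the signed interaction digraph of `f`. -/
def posIArc (f : (V → Bool) → V → Bool) (j i : V) : Prop :=
  ∃ x : V → Bool, x j = false ∧ f x i = false ∧ f (Function.update x j true) i = true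

/-- Negative arc of the signed interaction digraph of `f`. -/
def negIArc (f : (V → Bool) → V → Bool) (j i : V) : Prop :=
  ∃ x : V → Bool, x j = false ∧ f x i = true ∧ f (Function.update x j true) i = false

/-- `f` is a Boolean network on `G`: the signed interaction digraph of `f` is `G`. -/
def IsBNOn (f : (V → Bool) → V → Bool) (G : SignedDigraph V) : Prop :=
  (∀ j i, G.pos j i ↔ posIArc f j i) ∧ (∀ j i, G.neg j i ↔ negIArc f j i)

/-- Component `i` of `f` is a conjunction with respect to `G`. -/
def IsConjunction (G : SignedDigraph V) (f : (V → Bool) → V → Bool) (i : V) : Prop :=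
  ∀ x : V → Bool, (f x i = true ↔
    (∀ j, G.pos j i → x j = true) ∧ (∀ j, G.neg j i → x j = false))

/-- Component `i` of `f` is a disjunction with respect to `G`. -/
def IsDisjunction (G : SignedDigraph V) (f : (V → Bool) → V → Bool) (i : V) : Prop :=
  ∀ x : V → Bool, (f x i = false ↔
    (∀ j, G.pos j i → x j = false) ∧ (∀ j, G.neg j i → x j = true))

/-- `f` is an and-or-net on `G`. -/
def IsAndOrNet (G : SignedDigraph V) (f : (V → Bool) → V → Bool) : Prop :=
  IsBNOn f G ∧ ∀ i, IsConjunction G f i ∨ IsDisjunction G f i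

/-- `f` is the and-net on `G`. -/
def IsAndNet (G : SignedDigraph V) (f : (V → Bool) → V → Bool) : Prop :=
  IsBNOn f G ∧ ∀ i, IsConjunction G f i

/-- `w` is a canalizing word from `(i, a)` with image `b`. -/
def Canalizing (f : (V → Bool) → V → Bool) (i : V) (a : Bool) (w : List V)
    (b : V → Bool) : Prop :=
  i ∉ w ∧ w.Nodup ∧ ∀ x : V → Bool, x i = a → ∀ j ∈ w, wordUpdate f w x j = b j

end BooleanNetwork

section WalkLemmas

variable {V : Type*} (G : SignedDigraph V)

lemma walkEnd_nil (u : V) : walkEnd u ([] : List (V × Bool)) = u := rfl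

lemma walkEnd_cons (u : V) (st : V × Bool) (rest : List (V × Bool)) :
    walkEnd u (st :: rest) = walkEnd st.1 rest := by
  simp only [walkEnd, List.map_cons, List.getLastD_cons]

lemma walkEnd_append (u : V) (a b : List (V × Bool)) :
    walkEnd u (a ++ b) = walkEnd (walkEnd u a) b := by
  induction a generalizing u with
  | nil => rfl
  | cons st rest ih => simp [walkEnd_cons, ih]

lemma walkEnd_concat (u : V) (a : List (V × Bool)) (st : V × Bool) :
    walkEnd u (a ++ [st]) = st.1 := by
  rw [walkEnd_append]; rfl

lemma walkSign_nil : walkSign ([] : List (V × Bool)) = true := rfl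

lemma beq_assoc' (a b c : Bool) : ((a == b) == c) = (a == (b == c)) := by
  revert a b c; decide

private lemma foldl_sign (b : List (V × Bool)) : ∀ x : Bool,
    b.foldl (fun acc st => acc == st.2) x = (x == walkSign b) := by
  induction b with
  | nil => intro x; simp [walkSign]
  | cons st rest ih =>
    intro x
    have h1 : walkSign (st :: rest) = (st.2 == walkSign rest) := by
      simp only [walkSign, List.foldl_cons]
      rw [ih (true == st.2), Bool.true_beq]; rfl
    simp only [List.foldl_cons]
    rw [ih (x == st.2), h1, beq_assoc']

lemma walkSign_append (a b : List (V × Bool)) :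
    walkSign (a ++ b) = (walkSign a == walkSign b) := by
  simp only [walkSign, List.foldl_append]
  rw [foldl_sign]; rfl

lemma walkSign_concat (a : List (V × Bool)) (st : V × Bool) :
    walkSign (a ++ [st]) = (walkSign a == st.2) := by
  rw [walkSign_append]; simp [walkSign]

lemma isWalk_append {u : V} {a b : List (V × Bool)} :
    G.IsWalk u (a ++ b) ↔ G.IsWalk u a ∧ G.IsWalk (walkEnd u a) b := by
  induction a generalizing u with
  | nil => simp [SignedDigraph.IsWalk, walkEnd_nil]
  | cons st rest ih =>
    simp only [List.cons_append, SignedDigraph.IsWalk, List.append_eq, ih, walkEnd_cons,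
      and_assoc]

end WalkLemmas

section CycleLemmas

variable {V : Type*} {G : SignedDigraph V}

private lemma map_dropLast' (f : V × Bool → V) :
    ∀ l : List (V × Bool), (l.dropLast).map f = (l.map f).dropLast := by
  intro l
  induction l with
  | nil => rfl
  | cons a l ih =>
    cases l with
    | nil => rfl
    | cons b l' => simp only [List.dropLast_cons₂, List.map_cons] at *; rw [ih]

/-- Any walk whose vertex list (excluding the final vertex) has a repetition contains a
proper closed subwalk. -/
private lemma extract' :
    ∀ (steps : List (V × Bool)) (u : V),
      ¬ ((u :: steps.map Prod.fst).dropLast).Nodup →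
      ∃ a b c : List (V × Bool), steps = a ++ b ++ c ∧ b ≠ [] ∧ c ≠ [] ∧
        walkEnd (walkEnd u a) b = walkEnd u a := by
  intro steps
  induction steps with
  | nil => intro u hnd; exact absurd List.nodup_nil hnd
  | cons st rest ih =>
    intro u hnd
    have hdl : ((u :: (st :: rest).map Prod.fst).dropLast)
        = u :: ((st.1 :: rest.map Prod.fst).dropLast) := by
      simp only [List.map_cons, List.dropLast_cons₂]
    rw [hdl, List.nodup_cons] at hnd
    push_neg at hnd
    rcases Classical.em (u ∈ (st.1 :: rest.map Prod.fst).dropLast) with hmem | hnmem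
    · -- u occurs again strictly before the end: closed subwalk at u from the start
      have hmem' : u ∈ ((st :: rest).dropLast).map Prod.fst := by
        rw [map_dropLast']; exact hmem
      obtain ⟨st', hst', hfst⟩ := List.mem_map.1 hmem'
      obtain ⟨s₁, s₂, hdec⟩ := List.append_of_mem hst'
      have hne : (st :: rest) ≠ [] := List.cons_ne_nil _ _
      obtain ⟨lst, hrec⟩ : ∃ lst, st :: rest = (st :: rest).dropLast ++ [lst] :=
        ⟨(st :: rest).getLast hne, (List.dropLast_append_getLast hne).symm⟩
      refine ⟨[], s₁ ++ [st'], s₂ ++ [lst], ?_, by simp, by simp, ?_⟩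
      · rw [hrec, hdec]; simp
      · rw [walkEnd_nil, walkEnd_concat, hfst]
    · have hnd' := hnd hnmem
      obtain ⟨a, b, c, hd, hb, hc, hcl⟩ := ih st.1 hnd'
      refine ⟨st :: a, b, c, by rw [hd]; simp, hb, hc, ?_⟩
      rwa [walkEnd_cons]

/-- With no negative cycle, every closed walk is positive. -/
lemma closedWalkPos (hneg : G.NoNegativeCycle) :
    ∀ (steps : List (V × Bool)) (u : V), G.IsWalk u steps → walkEnd u steps = u →
      walkSign steps = true := by
  have main : ∀ (n : ℕ) (steps : List (V × Bool)) (u : V), steps.length ≤ n →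
      G.IsWalk u steps → walkEnd u steps = u → walkSign steps = true := by
    intro n
    induction n with
    | zero =>
      intro steps u hlen _ _
      have : steps = [] := List.eq_nil_of_length_eq_zero (Nat.le_zero.1 hlen)
      rw [this]; rfl
    | succ n ihn =>
      intro steps u hlen hw he
      rcases Classical.em (steps = []) with rfl | hne
      · rfl
      rcases Classical.em (((u :: steps.map Prod.fst).dropLast).Nodup) with hnd | hnnd
      · -- it is a cycle
        have hmapne : steps.map Prod.fst ≠ [] := by
          simpa using hne
        have : (u :: steps.map Prod.fst).dropLast = u :: (steps.map Prod.fst).dropLast := by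
          cases hmap : steps.map Prod.fst with
          | nil => exact absurd hmap hmapne
          | cons a l => simp [List.dropLast_cons₂]
        rw [this] at hnd
        exact hneg u steps ⟨hne, hw, he, hnd⟩
      · obtain ⟨a, b, c, hd, hb, hc, hcl⟩ := extract' steps u hnnd
        subst hd
        set v := walkEnd u a with hv
        rw [isWalk_append G] at hw
        obtain ⟨hwab, hwc⟩ := hw
        rw [isWalk_append G] at hwab
        obtain ⟨hwa, hwb⟩ := hwab
        have hend_ab : walkEnd u (a ++ b) = v := by
          rw [walkEnd_append, ← hv, hcl]
        rw [hend_ab] at hwc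
        have hwac : G.IsWalk u (a ++ c) := (isWalk_append G).2 ⟨hwa, by rw [← hv]; exact hwc⟩
        have heac : walkEnd u (a ++ c) = u := by
          rw [walkEnd_append, ← hv]
          rw [walkEnd_append, hend_ab] at he
          exact he
        have hlb : b.length ≤ n := by
          have hc1 : 1 ≤ c.length := List.length_pos_iff.2 hc
          simp only [List.length_append] at hlen ⊢
          omega
        have hlac : (a ++ c).length ≤ n := by
          have hb1 : 1 ≤ b.length := List.length_pos_iff.2 hb
          simp only [List.length_append] at hlen ⊢
          omega
        have hsb : walkSign b = true := ihn b v hlb hwb hcl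
        have hsac : walkSign (a ++ c) = true := ihn (a ++ c) u hlac hwac heac
        rw [walkSign_append] at hsac
        rw [walkSign_append, walkSign_append, hsb]
        revert hsac
        cases walkSign a <;> cases walkSign c <;> decide
  exact fun steps u => main steps.length steps u le_rfl

/-- Harmony: if `v` reaches back to `u`, all walks from `u` to `v` have the same sign. -/
lemma harmony (hneg : G.NoNegativeCycle) {u v : V} (hback : G.Reach v u)
    {s₁ s₂ : List (V × Bool)} (h₁ : G.IsWalk u s₁) (e₁ : walkEnd u s₁ = v)
    (h₂ : G.IsWalk u s₂) (e₂ : walkEnd u s₂ = v) :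
    walkSign s₁ = walkSign s₂ := by
  obtain ⟨t, ht, et⟩ := hback
  have k₁ : walkSign (s₁ ++ t) = true :=
    closedWalkPos hneg _ u ((isWalk_append G).2 ⟨h₁, by rwa [e₁]⟩)
      (by rw [walkEnd_append, e₁, et])
  have k₂ : walkSign (s₂ ++ t) = true :=
    closedWalkPos hneg _ u ((isWalk_append G).2 ⟨h₂, by rwa [e₂]⟩)
      (by rw [walkEnd_append, e₂, et])
  rw [walkSign_append] at k₁ k₂
  have := k₁.trans k₂.symm
  revert this
  cases walkSign s₁ <;> cases walkSign s₂ <;> cases walkSign t <;> decide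

end CycleLemmas

section NetworkLemmas

variable {V : Type*} [DecidableEq V] {h : (V → Bool) → V → Bool} {j i : V}

/-- No negative arc: `h · i` is nondecreasing in coordinate `j` (upward). -/
lemma monoPos (hn : ¬ negIArc h j i) :
    ∀ z : V → Bool, z j = false → h z i = true → h (Function.update z j true) i = true := by
  intro z hzj hz
  by_contra hc
  exact hn ⟨z, hzj, hz, by revert hc; cases hval : h (Function.update z j true) i <;> simp⟩

/-- No positive arc: `h · i` stays false under an upward flip of `j`. -/
lemma monoNeg (hp : ¬ posIArc h j i) :
    ∀ z : V → Bool, z j = false → h z i = false → h (Function.update z j true) i = false := by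
  intro z hzj hz
  by_contra hc
  exact hp ⟨z, hzj, hz, by revert hc; cases hval : h (Function.update z j true) i <;> simp⟩

/-- No negative arc, downward version. -/
lemma monoPos' (hn : ¬ negIArc h j i) :
    ∀ z : V → Bool, z j = true → h z i = false → h (Function.update z j false) i = false := by
  intro z hzj hz
  set z₀ := Function.update z j false with hz₀
  have hz₀j : z₀ j = false := by simp [hz₀]
  have hzz : Function.update z₀ j true = z := by
    funext k
    rcases Classical.em (k = j) with rfl | hk
    · simp [hz₀, hzj]
    · simp [hz₀, Function.update_of_ne hk]
  by_contra hc
  have : h z₀ i = true := by revert hc; cases hval : h z₀ i <;> simp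
  have := monoPos hn z₀ hz₀j this
  rw [hzz, hz] at this
  exact absurd this (by simp)

/-- No positive arc, downward version. -/
lemma monoNeg' (hp : ¬ posIArc h j i) :
    ∀ z : V → Bool, z j = true → h z i = true → h (Function.update z j false) i = true := by
  intro z hzj hz
  set z₀ := Function.update z j false with hz₀
  have hz₀j : z₀ j = false := by simp [hz₀]
  have hzz : Function.update z₀ j true = z := by
    funext k
    rcases Classical.em (k = j) with rfl | hk
    · simp [hz₀, hzj]
    · simp [hz₀, Function.update_of_ne hk]
  by_contra hc
  have : h z₀ i = false := by revert hc; cases hval : h z₀ i <;> simp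
  have := monoNeg hp z₀ hz₀j this
  rw [hzz, hz] at this
  exact absurd this (by simp)

/-- No arc at all: `h · i` is independent of coordinate `j`. -/
lemma indepOfNoArc (hp : ¬ posIArc h j i) (hn : ¬ negIArc h j i) :
    ∀ (z : V → Bool) (b : Bool), h (Function.update z j b) i = h z i := by
  intro z b
  rcases Classical.em (b = z j) with rfl | hne
  · rw [Function.update_eq_self]
  · cases b with
    | true =>
      have hzj : z j = false := by revert hne; cases hv : z j <;> simp
      cases hv : h z i with
      | true => exact monoPos hn z hzj hv
      | false => exact monoNeg hp z hzj hv
    | false =>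
      have hzj : z j = true := by revert hne; cases hv : z j <;> simp
      cases hv : h z i with
      | true => exact monoNeg' hp z hzj hv
      | false => exact monoPos' hn z hzj hv

end NetworkLemmas

section FlipLemmas

variable {V : Type*} [Fintype V] [DecidableEq V]

/-- Flip coordinates one by one toward `x`, preserving the value of `h · i`. -/
lemma flipAll {h : (V → Bool) → V → Bool} {i : V} {b : Bool} (x : V → Bool)
    (Hk : ∀ (k : V) (z : V → Bool), z k ≠ x k → h z i = b →
      h (Function.update z k (x k)) i = b) :
    ∀ y : V → Bool, h y i = b → h x i = b := by
  classical
  have main : ∀ (n : ℕ) (y : V → Bool),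
      (Finset.univ.filter (fun k => y k ≠ x k)).card = n → h y i = b → h x i = b := by
    intro n
    induction n with
    | zero =>
      intro y hcard hy
      have : y = x := by
        funext k
        by_contra hk
        have : k ∈ Finset.univ.filter (fun k => y k ≠ x k) := by simp [hk]
        rw [Finset.card_eq_zero.1 hcard] at this
        exact absurd this (Finset.notMem_empty k)
      rwa [← this]
    | succ n ihn =>
      intro y hcard hy
      have hne : (Finset.univ.filter (fun k => y k ≠ x k)).Nonempty := by
        rw [← Finset.card_pos, hcard]; omega
      obtain ⟨k, hk⟩ := hne
      rw [Finset.mem_filter] at hk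
      set y' := Function.update y k (x k) with hy'
      have hval : h y' i = b := Hk k y hk.2 hy
      have hfil : Finset.univ.filter (fun k' => y' k' ≠ x k')
          = (Finset.univ.filter (fun k' => y k' ≠ x k')).erase k := by
        ext k'
        rcases Classical.em (k' = k) with rfl | hkk
        · simp [hy']
        · simp [hy', Function.update_of_ne hkk, hkk]
      have hcard' : (Finset.univ.filter (fun k' => y' k' ≠ x k')).card = n := by
        rw [hfil, Finset.card_erase_of_mem (by simp [hk.2]), hcard]; omega
      exact ihn y' hcard' hval
  exact fun y => main _ y rfl

/-- A component with no in-coming arc is constant. -/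
lemma constOfNoArc {h : (V → Bool) → V → Bool} {i : V}
    (hs : ∀ j, ¬ posIArc h j i ∧ ¬ negIArc h j i) :
    ∀ x y : V → Bool, h x i = h y i := by
  intro x y
  exact flipAll x (fun k z hzk hz => by
    rw [indepOfNoArc (hs k).1 (hs k).2]; exact hz) y rfl

end FlipLemmas

section PatternLemma

open Classical in
/-- In a network whose interaction arcs inside `A` are arcs of `G` (no negative cycles),
if every vertex of `A` has an in-coming arc, then there is an initial strong component `S`
carrying two distinct "switching" patterns, each of which is locally fixed. -/
theorem patternLemma {V : Type*} [Fintype V] [DecidableEq V] {G : SignedDigraph V}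
    (hneg : G.NoNegativeCycle) (A : Finset V) (hA : A.Nonempty)
    (h : (V → Bool) → V → Bool)
    (Hsub : ∀ j i, i ∈ A → (posIArc h j i → G.pos j i) ∧ (negIArc h j i → G.neg j i))
    (Hdep : ∀ (x y : V → Bool) (i : V), i ∈ A → (∀ a ∈ A, x a = y a) → h x i = h y i)
    (hns : ∀ i ∈ A, ∃ j, posIArc h j i ∨ negIArc h j i) :
    ∃ (S : Finset V) (u : V) (μ₁ μ₂ : V → Bool), u ∈ S ∧ S ⊆ A ∧ μ₁ u ≠ μ₂ u ∧
      (∀ x, (∀ k ∈ S, x k = μ₁ k) → ∀ i ∈ S, h x i = μ₁ i) ∧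
      (∀ x, (∀ k ∈ S, x k = μ₂ k) → ∀ i ∈ S, h x i = μ₂ i) := by
  classical
  -- sources of arcs into `A` lie in `A`
  have arcA : ∀ j i, i ∈ A → (posIArc h j i ∨ negIArc h j i) → j ∈ A := by
    intro j i hi harc
    by_contra hj
    have hind : ∀ (z : V → Bool) (b : Bool), h (Function.update z j b) i = h z i := by
      intro z b
      refine Hdep _ _ i hi (fun a ha => ?_)
      have haj : a ≠ j := fun he => hj (by rw [← he]; exact ha)
      rw [Function.update_of_ne haj]
    rcases harc with hp | hn
    · obtain ⟨x, _, hx0, hx1⟩ := hp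
      rw [hind, hx0] at hx1; exact Bool.noConfusion hx1
    · obtain ⟨x, _, hx0, hx1⟩ := hn
      rw [hind, hx0] at hx1; exact Bool.noConfusion hx1
  set hR : V → V → Prop := fun j i => i ∈ A ∧ (posIArc h j i ∨ negIArc h j i) with hRdef
  have hRA : ∀ {j i}, hR j i → j ∈ A ∧ i ∈ A := fun hji => ⟨arcA _ _ hji.1 hji.2, hji.1⟩
  -- pick a vertex whose "reaching set" is minimal: its component is initial
  set R : V → Finset V := fun v => A.filter (fun w => Relation.ReflTransGen hR w v) with hRset
  obtain ⟨u, huA, hmin⟩ := A.exists_min_image (fun v => (R v).card) hA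
  have hminp : ∀ v, Relation.ReflTransGen hR v u → Relation.ReflTransGen hR u v := by
    intro v hvu
    by_contra huv
    have hvA : v ∈ A := by
      rcases Relation.ReflTransGen.cases_head hvu with heq | ⟨c, hvc, _⟩
      · rw [heq]; exact huA
      · exact (hRA hvc).1
    have hsub : R v ⊆ R u := by
      intro w hw
      rw [hRset, Finset.mem_filter] at hw ⊢
      exact ⟨hw.1, hw.2.trans hvu⟩
    have hmem : u ∈ R u := by
      rw [hRset, Finset.mem_filter]; exact ⟨huA, Relation.ReflTransGen.refl⟩
    have hnmem : u ∉ R v := by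
      rw [hRset, Finset.mem_filter]
      exact fun hm => huv hm.2
    have hlt : (R v).card < (R u).card :=
      Finset.card_lt_card ⟨hsub, fun hss => hnmem (hss hmem)⟩
    exact absurd (hmin v hvA) (not_le.2 hlt)
  set S : Finset V := A.filter
      (fun v => Relation.ReflTransGen hR u v ∧ Relation.ReflTransGen hR v u) with hSdef
  have huS : u ∈ S := by
    rw [hSdef, Finset.mem_filter]
    exact ⟨huA, Relation.ReflTransGen.refl, Relation.ReflTransGen.refl⟩
  have hSA : S ⊆ A := Finset.filter_subset _ _
  have hinit : ∀ j i, hR j i → i ∈ S → j ∈ S := by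
    intro j i hji hiS
    rw [hSdef, Finset.mem_filter] at hiS ⊢
    have hju : Relation.ReflTransGen hR j u :=
      (Relation.ReflTransGen.single hji).trans hiS.2.2
    exact ⟨(hRA hji).1, hminp j hju, hju⟩
  -- reachability in the `h`-digraph gives `G`-walks
  have rtgWalk : ∀ {a b : V}, Relation.ReflTransGen hR a b →
      ∃ steps, G.IsWalk a steps ∧ walkEnd a steps = b := by
    intro a b hab
    induction hab with
    | refl => exact ⟨[], trivial, rfl⟩
    | @tail b' c' _ hstep ihw =>
      obtain ⟨steps, hw, he⟩ := ihw
      rcases hstep.2 with hp | hn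
      · have hGp : G.pos b' c' := (Hsub b' c' hstep.1).1 hp
        refine ⟨steps ++ [(c', true)], (isWalk_append G).2 ⟨hw, ?_⟩, walkEnd_concat _ _ _⟩
        rw [he]
        exact ⟨by simpa using hGp, trivial⟩
      · have hGn : G.neg b' c' := (Hsub b' c' hstep.1).2 hn
        refine ⟨steps ++ [(c', false)], (isWalk_append G).2 ⟨hw, ?_⟩, walkEnd_concat _ _ _⟩
        rw [he]
        exact ⟨by simpa using hGn, trivial⟩
  have choiceW : ∀ v ∈ S, ∃ steps, G.IsWalk u steps ∧ walkEnd u steps = v := by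
    intro v hv
    rw [hSdef, Finset.mem_filter] at hv
    exact rtgWalk hv.2.1
  set lam : V → Bool := fun v =>
    if hv : v ∈ S then walkSign (choiceW v hv).choose else false with hlamdef
  -- the key harmony property of `lam`
  have hlam : ∀ j i (s : Bool), i ∈ S → j ∈ S →
      (if s = true then G.pos j i else G.neg j i) → lam i = (lam j == s) := by
    intro j i s hiS hjS hGs
    have hWj := (choiceW j hjS).choose_spec
    have hWi := (choiceW i hiS).choose_spec
    have hback : G.Reach i u := by
      have hiu : Relation.ReflTransGen hR i u := by
        have := Finset.mem_filter.1 (hSdef ▸ hiS)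
        exact this.2.2
      obtain ⟨steps, hw, he⟩ := rtgWalk hiu
      exact ⟨steps, hw, he⟩
    have hw2 : G.IsWalk u ((choiceW j hjS).choose ++ [(i, s)]) := by
      refine (isWalk_append G).2 ⟨hWj.1, ?_⟩
      rw [hWj.2]
      exact ⟨hGs, trivial⟩
    have he2 : walkEnd u ((choiceW j hjS).choose ++ [(i, s)]) = i := walkEnd_concat _ _ _
    have heq := harmony hneg hback hWi.1 hWi.2 hw2 he2
    rw [walkSign_concat] at heq
    rw [hlamdef]
    simp only [dif_pos hiS, dif_pos hjS]
    exact heq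
  -- the general local-pattern lemma
  have pattern : ∀ μ : V → Bool,
      (∀ j i (s : Bool), i ∈ S → j ∈ S →
        (if s = true then G.pos j i else G.neg j i) → μ i = (μ j == s)) →
      ∀ x, (∀ k ∈ S, x k = μ k) → ∀ i ∈ S, h x i = μ i := by
    intro μ Hμ x hx i hiS
    have excl : ∀ k, k ∈ S → posIArc h k i → negIArc h k i → False := by
      intro k hkS hp hn
      have h1 := Hμ k i true hiS hkS (by simpa using (Hsub k i (hSA hiS)).1 hp)
      have h2 := Hμ k i false hiS hkS (by simpa using (Hsub k i (hSA hiS)).2 hn)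
      rw [h1] at h2
      revert h2; cases μ k <;> decide
    have cond : ∀ (k : V) (z : V → Bool), z k ≠ x k → h z i = μ i →
        h (Function.update z k (x k)) i = μ i := by
      intro k z hzk hz
      rcases Classical.em (posIArc h k i ∨ negIArc h k i) with harc | hnoarc
      · have hkS : k ∈ S := hinit k i ⟨hSA hiS, harc⟩ hiS
        have hxk : x k = μ k := hx k hkS
        rcases harc with hp | hn
        · have hnn : ¬ negIArc h k i := fun hnn => excl k hkS hp hnn
          have hμk : μ i = (μ k == true) :=
            Hμ k i true hiS hkS (by simpa using (Hsub k i (hSA hiS)).1 hp)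
          have hμk' : μ k = μ i := by revert hμk; cases μ k <;> cases μ i <;> decide
          cases hb : μ i with
          | true =>
            have hxk' : x k = true := by rw [hxk, hμk', hb]
            have hzk' : z k = false := by
              rw [hxk'] at hzk; revert hzk; cases z k <;> simp
            rw [hb] at hz
            rw [hxk']
            exact monoPos hnn z hzk' hz
          | false =>
            have hxk' : x k = false := by rw [hxk, hμk', hb]
            have hzk' : z k = true := by
              rw [hxk'] at hzk; revert hzk; cases z k <;> simp
            rw [hb] at hz
            rw [hxk']
            exact monoPos' hnn z hzk' hz
        · have hpp : ¬ posIArc h k i := fun hpp => excl k hkS hpp hn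
          have hμk : μ i = (μ k == false) :=
            Hμ k i false hiS hkS (by simpa using (Hsub k i (hSA hiS)).2 hn)
          have hμk' : μ k = !(μ i) := by revert hμk; cases μ k <;> cases μ i <;> decide
          cases hb : μ i with
          | true =>
            have hxk' : x k = false := by rw [hxk, hμk', hb]; rfl
            have hzk' : z k = true := by
              rw [hxk'] at hzk; revert hzk; cases z k <;> simp
            rw [hb] at hz
            rw [hxk']
            exact monoNeg' hpp z hzk' hz
          | false =>
            have hxk' : x k = true := by rw [hxk, hμk', hb]; rfl
            have hzk' : z k = false := by
              rw [hxk'] at hzk; revert hzk; cases z k <;> simp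
            rw [hb] at hz
            rw [hxk']
            exact monoNeg hpp z hzk' hz
      · have hp : ¬ posIArc h k i := fun hp => hnoarc (Or.inl hp)
        have hn : ¬ negIArc h k i := fun hn => hnoarc (Or.inr hn)
        rw [indepOfNoArc hp hn]; exact hz
    obtain ⟨j, hj⟩ := hns i (hSA hiS)
    obtain ⟨y₀, hy₀⟩ : ∃ y₀, h y₀ i = μ i := by
      rcases hj with hp | hn
      · obtain ⟨z, _, hz0, hz1⟩ := hp
        cases hb : μ i with
        | true => exact ⟨Function.update z j true, hz1⟩
        | false => exact ⟨z, hz0⟩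
      · obtain ⟨z, _, hz0, hz1⟩ := hn
        cases hb : μ i with
        | true => exact ⟨z, hz0⟩
        | false => exact ⟨Function.update z j true, hz1⟩
    exact flipAll x cond y₀ hy₀
  -- the two patterns
  have hlam' : ∀ j i (s : Bool), i ∈ S → j ∈ S →
      (if s = true then G.pos j i else G.neg j i) → (!(lam i)) = ((!(lam j)) == s) := by
    intro j i s hiS hjS hGs
    rw [hlam j i s hiS hjS hGs]
    cases lam j <;> cases s <;> rfl
  refine ⟨S, u, lam, fun v => !(lam v), huS, hSA, ?_, pattern lam hlam, pattern _ hlam'⟩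
  show lam u ≠ !(lam u)
  cases hval : lam u <;> simp [hval]
end PatternLemma

section MainLemma

variable {V : Type*} [Fintype V] [DecidableEq V]

theorem mainLemma (G : SignedDigraph V) (hneg : G.NoNegativeCycle) :
    ∀ A : Finset V, ∀ h : (V → Bool) → V → Bool,
      (∀ j i, i ∈ A → (posIArc h j i → G.pos j i) ∧ (negIArc h j i → G.neg j i)) →
      (∀ (x y : V → Bool) (i : V), i ∈ A → (∀ a ∈ A, x a = y a) → h x i = h y i) →
      (∃ x, ∀ i ∈ A, h x i = x i) ∧
      ((∀ x y, (∀ i ∈ A, h x i = x i) → (∀ i ∈ A, h y i = y i) → ∀ i ∈ A, x i = y i) →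
        ∃ w : List V, w.length = A.card ∧ (∀ l ∈ w, l ∈ A) ∧
          ∀ x y, ∀ i ∈ A, wordUpdate h w x i = wordUpdate h w y i) := by
  classical
  intro A
  induction A using Finset.strongInduction with
  | _ A ih =>
    intro h Hsub Hdep
    rcases Classical.em (A = ∅) with rfl | hAne
    · exact ⟨⟨fun _ => false, by simp⟩, fun _ => ⟨[], by simp, by simp, by simp⟩⟩
    have hA : A.Nonempty := Finset.nonempty_of_ne_empty hAne
    rcases Classical.em (∃ i ∈ A, ∀ j, ¬ posIArc h j i ∧ ¬ negIArc h j i) with hsrc | hnosrc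
    · -- a source exists: freeze it and recurse
      obtain ⟨i, hiA, hs⟩ := hsrc
      have hconst : ∀ x y, h x i = h y i := constOfNoArc hs
      set c : Bool := h (fun _ => false) i with hc
      set h' : (V → Bool) → V → Bool := fun x i' => h (Function.update x i c) i' with hh'
      have hA' : A.erase i ⊂ A := Finset.erase_ssubset hiA
      have Hsub' : ∀ j i', i' ∈ A.erase i →
          (posIArc h' j i' → G.pos j i') ∧ (negIArc h' j i' → G.neg j i') := by
        intro j i' hi'
        have hi'A : i' ∈ A := Finset.mem_of_mem_erase hi'
        constructor
        · rintro ⟨x, hxj, h0, h1⟩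
          rcases Classical.em (j = i) with rfl | hji
          · exfalso
            have h1' : h (Function.update (Function.update x j true) j c) i' = true := h1
            rw [Function.update_idem] at h1'
            have h0' : h (Function.update x j c) i' = false := h0
            rw [h0'] at h1'; exact Bool.noConfusion h1'
          · refine (Hsub j i' hi'A).1 ⟨Function.update x i c, ?_, h0, ?_⟩
            · rw [Function.update_of_ne hji]; exact hxj
            · rw [← Function.update_comm hji]; exact h1
        · rintro ⟨x, hxj, h0, h1⟩
          rcases Classical.em (j = i) with rfl | hji
          · exfalso
            have h1' : h (Function.update (Function.update x j true) j c) i' = false := h1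
            rw [Function.update_idem] at h1'
            have h0' : h (Function.update x j c) i' = true := h0
            rw [h0'] at h1'; exact Bool.noConfusion h1'
          · refine (Hsub j i' hi'A).2 ⟨Function.update x i c, ?_, h0, ?_⟩
            · rw [Function.update_of_ne hji]; exact hxj
            · rw [← Function.update_comm hji]; exact h1
      have Hdep' : ∀ (x y : V → Bool) (i' : V), i' ∈ A.erase i →
          (∀ a ∈ A.erase i, x a = y a) → h' x i' = h' y i' := by
        intro x y i' hi' hagree
        refine Hdep _ _ i' (Finset.mem_of_mem_erase hi') (fun a ha => ?_)
        rcases Classical.em (a = i) with rfl | hai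
        · simp
        · rw [Function.update_of_ne hai, Function.update_of_ne hai]
          exact hagree a (Finset.mem_erase.2 ⟨hai, ha⟩)
      obtain ⟨⟨x', hx'⟩, hsync'⟩ := ih (A.erase i) hA' h' Hsub' Hdep'
      have hfixext : ∀ z : V → Bool, (∀ i₂ ∈ A.erase i, h' z i₂ = z i₂) →
          ∀ i₂ ∈ A, h (Function.update z i c) i₂ = Function.update z i c i₂ := by
        intro z hz i₂ hi₂
        rcases Classical.em (i₂ = i) with rfl | hne
        · rw [Function.update_self, hconst _ (fun _ => false)]
        · rw [Function.update_of_ne hne]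
          exact hz i₂ (Finset.mem_erase.2 ⟨hne, hi₂⟩)
      constructor
      · exact ⟨Function.update x' i c, hfixext x' hx'⟩
      · intro Huniq
        have Huniq' : ∀ x y, (∀ i₂ ∈ A.erase i, h' x i₂ = x i₂) →
            (∀ i₂ ∈ A.erase i, h' y i₂ = y i₂) → ∀ i₂ ∈ A.erase i, x i₂ = y i₂ := by
          intro x y hx hy i₂ hi₂
          have := Huniq (Function.update x i c) (Function.update y i c)
            (hfixext x hx) (hfixext y hy) i₂ (Finset.mem_of_mem_erase hi₂)
          have hne := (Finset.mem_erase.1 hi₂).1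
          rwa [Function.update_of_ne hne, Function.update_of_ne hne] at this
        obtain ⟨w', hlen', hmem', hsync⟩ := hsync' Huniq'
        have hcardA : 1 ≤ A.card := Finset.card_pos.2 hA
        refine ⟨i :: w', ?_, ?_, ?_⟩
        · simp only [List.length_cons, hlen', Finset.card_erase_of_mem hiA]
          omega
        · intro l hl
          rcases List.mem_cons.1 hl with rfl | hl'
          · exact hiA
          · exact Finset.mem_of_mem_erase (hmem' l hl')
        · -- the word i :: w' synchronizes on A
          have swap : ∀ (w : List V), (∀ l ∈ w, l ∈ A.erase i) → ∀ z : V → Bool, z i = c →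
              wordUpdate h w z = wordUpdate h' w z ∧ (wordUpdate h w z) i = c := by
            intro w hw
            induction w with
            | nil => exact fun z hz => ⟨rfl, hz⟩
            | cons l w ihw =>
              intro z hz
              have hli : l ≠ i := (Finset.mem_erase.1 (hw l (List.mem_cons_self))).1
              have hupz : Function.update z i c = z := by
                rw [← hz, Function.update_eq_self]
              have hlu : localUpdate h l z = localUpdate h' l z := by
                show Function.update z l (h z l) = Function.update z l (h' z l)
                have hval : h' z l = h z l := by
                  show h (Function.update z i c) l = h z l
                  rw [hupz]
                rw [hval]
              have hzi' : (localUpdate h l z) i = c := by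
                unfold localUpdate
                rw [Function.update_of_ne (fun he => hli he.symm)]
                exact hz
              have hrest := ihw (fun l' hl' => hw l' (List.mem_cons_of_mem _ hl'))
                (localUpdate h l z) hzi'
              constructor
              · show wordUpdate h (l :: w) z = wordUpdate h' (l :: w) z
                simp only [wordUpdate, List.foldl_cons]
                rw [← hlu]
                exact hrest.1
              · show (wordUpdate h (l :: w) z) i = c
                simp only [wordUpdate, List.foldl_cons]
                exact hrest.2
          intro x y i'' hi''
          have hzx : (localUpdate h i x) i = c := by
            unfold localUpdate
            rw [Function.update_self, hconst x (fun _ => false)]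
          have hzy : (localUpdate h i y) i = c := by
            unfold localUpdate
            rw [Function.update_self, hconst y (fun _ => false)]
          have hswx := swap w' hmem' (localUpdate h i x) hzx
          have hswy := swap w' hmem' (localUpdate h i y) hzy
          have hcx : wordUpdate h (i :: w') x = wordUpdate h w' (localUpdate h i x) := by
            simp only [wordUpdate, List.foldl_cons]
          have hcy : wordUpdate h (i :: w') y = wordUpdate h w' (localUpdate h i y) := by
            simp only [wordUpdate, List.foldl_cons]
          rcases Classical.em (i'' = i) with rfl | hne
          · rw [hcx, hcy, hswx.2, hswy.2]
          · rw [hcx, hcy, hswx.1, hswy.1]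
            exact hsync (localUpdate h i x) (localUpdate h i y) i''
              (Finset.mem_erase.2 ⟨hne, hi''⟩)
    · -- no source: every vertex of `A` has an in-coming arc
      have hns : ∀ i ∈ A, ∃ j, posIArc h j i ∨ negIArc h j i := by
        intro i hiA
        by_contra hno
        push_neg at hno
        exact hnosrc ⟨i, hiA, hno⟩
      obtain ⟨S, u, μ₁, μ₂, huS, hSA, hμne, hpat₁, hpat₂⟩ :=
        patternLemma hneg A hA h Hsub Hdep hns
      have extend : ∀ μ : V → Bool, (∀ x, (∀ k ∈ S, x k = μ k) → ∀ i' ∈ S, h x i' = μ i') →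
          ∃ x, (∀ i' ∈ A, h x i' = x i') ∧ ∀ k ∈ S, x k = μ k := by
        intro μ hpat
        set h' : (V → Bool) → V → Bool :=
          fun x i' => h (fun k => if k ∈ S then μ k else x k) i' with hh'
        have hAS : A \ S ⊂ A := Finset.sdiff_ssubset hSA ⟨u, huS⟩
        have Hsub' : ∀ j i', i' ∈ A \ S →
            (posIArc h' j i' → G.pos j i') ∧ (negIArc h' j i' → G.neg j i') := by
          intro j i' hi'
          have hi'A : i' ∈ A := (Finset.mem_sdiff.1 hi').1
          have key : ∀ (x : V → Bool),
              (fun k => if k ∈ S then μ k else (Function.update x j true) k)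
              = if j ∈ S then (fun k => if k ∈ S then μ k else x k)
                else Function.update (fun k => if k ∈ S then μ k else x k) j true := by
            intro x
            rcases Classical.em (j ∈ S) with hjS | hjS
            · rw [if_pos hjS]
              funext k
              rcases Classical.em (k ∈ S) with hkS | hkS
              · simp [hkS]
              · simp only [if_neg hkS]
                rw [Function.update_of_ne (fun he => hkS (by rw [he]; exact hjS))]
            · rw [if_neg hjS]
              funext k
              rcases Classical.em (k = j) with rfl | hkj
              · simp [hjS]
              · simp only [Function.update_of_ne hkj]
                try rfl
          constructor
          · rintro ⟨x, hxj, h0, h1⟩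
            rcases Classical.em (j ∈ S) with hjS | hjS
            · exfalso
              have h1' : h (fun k => if k ∈ S then μ k else (Function.update x j true) k) i'
                  = true := h1
              rw [key x, if_pos hjS] at h1'
              have h0' : h (fun k => if k ∈ S then μ k else x k) i' = false := h0
              rw [h0'] at h1'; exact Bool.noConfusion h1'
            · refine (Hsub j i' hi'A).1 ⟨(fun k => if k ∈ S then μ k else x k), ?_, h0, ?_⟩
              · simp only [if_neg hjS]; exact hxj
              · have h1' : h (fun k => if k ∈ S then μ k else (Function.update x j true) k) i'
                    = true := h1
                rw [key x, if_neg hjS] at h1'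
                exact h1'
          · rintro ⟨x, hxj, h0, h1⟩
            rcases Classical.em (j ∈ S) with hjS | hjS
            · exfalso
              have h1' : h (fun k => if k ∈ S then μ k else (Function.update x j true) k) i'
                  = false := h1
              rw [key x, if_pos hjS] at h1'
              have h0' : h (fun k => if k ∈ S then μ k else x k) i' = true := h0
              rw [h0'] at h1'; exact Bool.noConfusion h1'
            · refine (Hsub j i' hi'A).2 ⟨(fun k => if k ∈ S then μ k else x k), ?_, h0, ?_⟩
              · simp only [if_neg hjS]; exact hxj
              · have h1' : h (fun k => if k ∈ S then μ k else (Function.update x j true) k) i'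
                    = false := h1
                rw [key x, if_neg hjS] at h1'
                exact h1'
        have Hdep' : ∀ (x y : V → Bool) (i' : V), i' ∈ A \ S →
            (∀ a ∈ A \ S, x a = y a) → h' x i' = h' y i' := by
          intro x y i' hi' hagree
          refine Hdep _ _ i' (Finset.mem_sdiff.1 hi').1 (fun a ha => ?_)
          rcases Classical.em (a ∈ S) with haS | haS
          · simp [haS]
          · simp only [if_neg haS]
            exact hagree a (Finset.mem_sdiff.2 ⟨ha, haS⟩)
        obtain ⟨⟨x', hx'⟩, _⟩ := ih (A \ S) hAS h' Hsub' Hdep'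
        refine ⟨fun k => if k ∈ S then μ k else x' k, ?_, fun k hk => if_pos hk⟩
        intro i' hi'
        rcases Classical.em (i' ∈ S) with hi'S | hi'S
        · rw [hpat _ (fun k hk => if_pos hk) i' hi'S]
          show μ i' = if i' ∈ S then μ i' else x' i'
          rw [if_pos hi'S]
        · have heq : h (fun k => if k ∈ S then μ k else x' k) i' = h' x' i' := rfl
          rw [heq, hx' i' (Finset.mem_sdiff.2 ⟨hi', hi'S⟩)]
          show x' i' = if i' ∈ S then μ i' else x' i'
          rw [if_neg hi'S]
      constructor
      · obtain ⟨x, hx, _⟩ := extend μ₁ hpat₁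
        exact ⟨x, hx⟩
      · intro Huniq
        exfalso
        obtain ⟨x₁, hx₁, hμ₁⟩ := extend μ₁ hpat₁
        obtain ⟨x₂, hx₂, hμ₂⟩ := extend μ₂ hpat₂
        have := Huniq x₁ x₂ hx₁ hx₂ u (hSA huS)
        rw [hμ₁ u huS, hμ₂ u huS] at this
        exact hμne this

end MainLemma


/-- Proposition 7 of the paper. Let `G` be a signed digraph on `n`
vertices without negative cycles and `f` a Boolean network on `G`. The following are
equivalent: (1) `f` has exactly one fixed point; (2) `f` has a synchronizing word of
length `n`; (3) `f` is synchronizing. -/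
theorem statement18 {V : Type} [Fintype V] [DecidableEq V]
    (G : SignedDigraph V) (n : ℕ) (hn : Fintype.card V = n)
    (hneg : G.NoNegativeCycle)
    (f : (V → Bool) → V → Bool) (hf : IsBNOn f G) :
    ((∃! x : V → Bool, f x = x) ↔
      (∃ w : List V, w.length = n ∧ SyncWord f w)) ∧
    ((∃ w : List V, w.length = n ∧ SyncWord f w) ↔ Synchronizing f) := by
  classical
  have Hsub : ∀ j i, i ∈ (Finset.univ : Finset V) →
      (posIArc f j i → G.pos j i) ∧ (negIArc f j i → G.neg j i) :=
    fun j i _ => ⟨(hf.1 j i).2, (hf.2 j i).2⟩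
  have Hdep : ∀ (x y : V → Bool) (i : V), i ∈ (Finset.univ : Finset V) →
      (∀ a ∈ (Finset.univ : Finset V), x a = y a) → f x i = f y i := by
    intro x y i _ hxy
    have : x = y := funext fun a => hxy a (Finset.mem_univ a)
    rw [this]
  obtain ⟨⟨x₀, hx₀⟩, hsync⟩ := mainLemma G hneg Finset.univ f Hsub Hdep
  have hfix₀ : f x₀ = x₀ := funext fun i => hx₀ i (Finset.mem_univ i)
  have hcard : (Finset.univ : Finset V).card = n := by rw [Finset.card_univ, hn]
  have hpres : ∀ (w : List V) (x : V → Bool), f x = x → wordUpdate f w x = x := by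
    intro w x hx
    induction w with
    | nil => rfl
    | cons l w ihw =>
      have hl : localUpdate f l x = x := by
        unfold localUpdate
        rw [hx, Function.update_eq_self]
      show wordUpdate f w (localUpdate f l x) = x
      rw [hl]
      exact ihw
  have uniqOfSync : ∀ w, SyncWord f w → ∀ x y : V → Bool, f x = x → f y = y → x = y := by
    rintro w ⟨c, hc⟩ x y hx hy
    rw [← hpres w x hx, ← hpres w y hy, hc x, hc y]
  have h12 : (∃! x : V → Bool, f x = x) → ∃ w : List V, w.length = n ∧ SyncWord f w := by
    rintro ⟨x, hx, huniq⟩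
    have Huniq : ∀ a b : V → Bool, (∀ i ∈ (Finset.univ : Finset V), f a i = a i) →
        (∀ i ∈ (Finset.univ : Finset V), f b i = b i) →
        ∀ i ∈ (Finset.univ : Finset V), a i = b i := by
      intro a b ha hb i _
      have ha' : f a = a := funext fun i => ha i (Finset.mem_univ i)
      have hb' : f b = b := funext fun i => hb i (Finset.mem_univ i)
      rw [huniq a ha', huniq b hb']
    obtain ⟨w, hlen, _, hs⟩ := hsync Huniq
    refine ⟨w, by rw [hlen, hcard], wordUpdate f w (fun _ => false), fun z => ?_⟩
    exact funext fun i => hs z (fun _ => false) i (Finset.mem_univ i)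
  have huniqfix : ∀ w, SyncWord f w → (∃! x : V → Bool, f x = x) := by
    intro w hsw
    exact ⟨x₀, hfix₀, fun y hy => uniqOfSync w hsw y x₀ hy hfix₀⟩
  constructor
  · constructor
    · exact h12
    · rintro ⟨w, _, hsw⟩
      exact huniqfix w hsw
  · constructor
    · rintro ⟨w, _, hsw⟩
      exact ⟨w, hsw⟩
    · rintro ⟨w, hsw⟩
      exact h12 (huniqfix w hsw)
end

section
/- Let G be a signed digraph on a finite vertex set V with |V| = n and without positive cycles, and let f be a Boolean network on G that has a fixed point. Then f has a synchronizing word of length n. -/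
set_option linter.unusedSectionVars false

section Statement19Aux

variable {V : Type} [Fintype V] [DecidableEq V]

private lemma aux_arc (G : SignedDigraph V) (f : (V → Bool) → V → Bool)
    (hf : IsBNOn f G) (a : V → Bool) (ha : ∀ i, f a i = a i)
    (T : Finset V) (i : V)
    (hx : ∃ x : V → Bool, (∀ t ∈ T, x t = a t) ∧ f x i ≠ a i) :
    ∃ j, j ∉ T ∧ ((a j == a i) = true → G.pos j i) ∧
      ((a j == a i) = false → G.neg j i) := by
  classical
  let P : ℕ → Prop := fun m => ∃ x : V → Bool, (∀ t ∈ T, x t = a t) ∧ f x i ≠ a i ∧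
    (Finset.univ.filter (fun k => x k ≠ a k)).card = m
  have hPex : ∃ m, P m := by
    obtain ⟨x, h1, h2⟩ := hx
    exact ⟨_, x, h1, h2, rfl⟩
  obtain ⟨x, hxT, hxi, hxc⟩ := Nat.find_spec hPex
  have hmin : ∀ m, m < Nat.find hPex → ¬ P m := fun m hm => Nat.find_min hPex hm
  have hNpos : 0 < Nat.find hPex := by
    rcases Nat.eq_zero_or_pos (Nat.find hPex) with h0 | h
    · exfalso
      rw [h0, Finset.card_eq_zero] at hxc
      have hxa : x = a := by
        funext k
        by_contra hk
        have hk' : k ∈ Finset.univ.filter (fun k => x k ≠ a k) := by simp [hk]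
        rw [hxc] at hk'
        exact absurd hk' (Finset.notMem_empty k)
      exact hxi (by rw [hxa]; exact ha i)
    · exact h
  have hne : (Finset.univ.filter (fun k => x k ≠ a k)).Nonempty := by
    rw [← Finset.card_pos, hxc]; exact hNpos
  obtain ⟨j, hj⟩ := hne
  have hxj : x j ≠ a j := by simpa using hj
  have hjT : j ∉ T := fun hjT => hxj (hxT j hjT)
  have hx'T : ∀ t ∈ T, Function.update x j (a j) t = a t := by
    intro t ht
    by_cases htj : t = j
    · subst htj; simp
    · rw [Function.update_of_ne htj]; exact hxT t ht
  have hcard' : (Finset.univ.filter (fun k => Function.update x j (a j) k ≠ a k)).card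
      = Nat.find hPex - 1 := by
    have hset : Finset.univ.filter (fun k => Function.update x j (a j) k ≠ a k)
        = (Finset.univ.filter (fun k => x k ≠ a k)).erase j := by
      ext k
      by_cases hkj : k = j
      · subst hkj; simp
      · simp [Function.update_of_ne hkj, hkj]
    rw [hset, Finset.card_erase_of_mem hj, hxc]
  have hfx' : f (Function.update x j (a j)) i = a i := by
    by_contra hne'
    exact hmin _ (by omega) ⟨_, hx'T, hne', hcard'⟩
  have hfx : f x i = !(a i) := by
    cases h : f x i <;> cases h2 : a i <;> simp_all
  have hxjv : x j = !(a j) := by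
    cases h : x j <;> cases h2 : a j <;> simp_all
  have hxt0 : a j = false → x j = true := fun hbj => by rw [hxjv, hbj]; rfl
  have e10 : a j = false → Function.update (Function.update x j (a j)) j true = x := by
    intro hbj
    rw [Function.update_idem, ← hxt0 hbj, Function.update_eq_self]
  refine ⟨j, hjT, ?_, ?_⟩ <;> intro hsign
  · -- positive arc
    apply (hf.1 j i).mpr
    cases hbj : a j <;> cases hbi : a i
    · -- a j = false, a i = false
      refine ⟨Function.update x j (a j), ?_, ?_, ?_⟩
      · rw [Function.update_self, hbj]
      · rw [hfx', hbi]
      · rw [e10 hbj, hfx, hbi]; rfl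
    · rw [hbj, hbi] at hsign; simp at hsign
    · rw [hbj, hbi] at hsign; simp at hsign
    · -- a j = true, a i = true
      refine ⟨x, ?_, ?_, ?_⟩
      · rw [hxjv, hbj]; rfl
      · rw [hfx, hbi]; rfl
      · rw [show Function.update x j true = Function.update x j (a j) by rw [hbj],
          hfx', hbi]
  · -- negative arc
    apply (hf.2 j i).mpr
    cases hbj : a j <;> cases hbi : a i
    · rw [hbj, hbi] at hsign; simp at hsign
    · -- a j = false, a i = true
      refine ⟨Function.update x j (a j), ?_, ?_, ?_⟩
      · rw [Function.update_self, hbj]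
      · rw [hfx', hbi]
      · rw [e10 hbj, hfx, hbi]; rfl
    · -- a j = true, a i = false
      refine ⟨x, ?_, ?_, ?_⟩
      · rw [hxjv, hbj]; rfl
      · rw [hfx, hbi]; rfl
      · rw [show Function.update x j true = Function.update x j (a j) by rw [hbj],
          hfx', hbi]
    · rw [hbj, hbi] at hsign; simp at hsign

private def cycSteps (a : V → Bool) (φ : V → V) (u : V) (m : ℕ) : List (V × Bool) :=
  (List.range m).map fun t =>
    (φ^[m - 1 - t] u, a (φ (φ^[m - 1 - t] u)) == a (φ^[m - 1 - t] u))

private lemma cycSteps_succ (a : V → Bool) (φ : V → V) (u : V) (m : ℕ) :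
    cycSteps a φ u (m + 1)
      = (φ^[m] u, a (φ (φ^[m] u)) == a (φ^[m] u)) :: cycSteps a φ u m := by
  unfold cycSteps
  rw [List.range_succ_eq_map, List.map_cons, List.map_map]
  congr 1
  apply List.map_congr_left
  intro t ht
  have h : m + 1 - 1 - (t + 1) = m - 1 - t := by omega
  simp only [Function.comp_def, Nat.succ_eq_add_one, h]

private lemma cycSteps_walk (G : SignedDigraph V) (a : V → Bool) (φ : V → V) (u : V)
    (harc : ∀ m : ℕ,
      ((a (φ (φ^[m] u)) == a (φ^[m] u)) = true → G.pos (φ (φ^[m] u)) (φ^[m] u)) ∧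
      ((a (φ (φ^[m] u)) == a (φ^[m] u)) = false → G.neg (φ (φ^[m] u)) (φ^[m] u))) :
    ∀ m : ℕ, G.IsWalk (φ^[m] u) (cycSteps a φ u m) := by
  intro m
  induction m with
  | zero => simp [cycSteps, SignedDigraph.IsWalk]
  | succ m ih =>
      rw [cycSteps_succ, Function.iterate_succ_apply']
      refine ⟨?_, ih⟩
      cases hb : (a (φ (φ^[m] u)) == a (φ^[m] u))
      · simpa [hb] using (harc m).2 hb
      · simpa [hb] using (harc m).1 hb

private lemma cycSteps_fold (a : V → Bool) (φ : V → V) (u : V) :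
    ∀ (m : ℕ) (acc : Bool),
      List.foldl (fun acc step => acc == step.2) acc (cycSteps a φ u m)
        = (acc == (a (φ^[m] u) == a u)) := by
  intro m
  induction m with
  | zero => intro acc; simp [cycSteps]
  | succ m ih =>
      intro acc
      rw [cycSteps_succ, List.foldl_cons, ih, Function.iterate_succ_apply']
      cases acc <;> cases a (φ (φ^[m] u)) <;> cases a (φ^[m] u) <;> cases a u <;> rfl

private lemma cycSteps_end (a : V → Bool) (φ : V → V) (u : V) (m : ℕ) :
    walkEnd u (cycSteps a φ u (m + 1)) = u := by
  unfold walkEnd cycSteps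
  rw [List.map_map, List.range_succ, List.map_append]
  have h : m + 1 - 1 - m = 0 := by omega
  simp [Function.comp_def, h]

private lemma cycSteps_nodup (a : V → Bool) (φ : V → V) (u : V) (k : ℕ) (hk : 0 < k)
    (hinj : ∀ p, p < k → ∀ q, q < k → φ^[p] u = φ^[q] u → p = q) :
    (u :: ((cycSteps a φ u k).map Prod.fst).dropLast).Nodup := by
  obtain ⟨m, rfl⟩ : ∃ m, k = m + 1 := ⟨k - 1, by omega⟩
  have h1 : ((cycSteps a φ u (m + 1)).map Prod.fst).dropLast
      = (List.range m).map (fun t => φ^[m - t] u) := by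
    unfold cycSteps
    simp only [List.map_map, List.range_succ, List.map_append, List.map_cons,
      List.map_nil, List.dropLast_concat]
    apply List.map_congr_left
    intro t ht
    have h : m + 1 - 1 - t = m - t := by omega
    simp only [Function.comp_def, h]
  rw [h1]
  refine List.nodup_cons.mpr ⟨?_, ?_⟩
  · intro hmem
    obtain ⟨t, ht, hteq⟩ := List.mem_map.mp hmem
    rw [List.mem_range] at ht
    have h0 : m - t = 0 := hinj (m - t) (by omega) 0 (by omega) (by simpa using hteq)
    omega
  · refine List.Nodup.map_on ?_ List.nodup_range
    intro t ht t' ht' hEq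
    rw [List.mem_range] at ht ht'
    have := hinj (m - t) (by omega) (m - t') (by omega) hEq
    omega

private lemma aux_exists (G : SignedDigraph V) (hpos : G.NoPositiveCycle)
    (f : (V → Bool) → V → Bool) (hf : IsBNOn f G)
    (a : V → Bool) (ha : ∀ i, f a i = a i)
    (T : Finset V) (hT : T ≠ Finset.univ) :
    ∃ i, i ∉ T ∧ ∀ x : V → Bool, (∀ t ∈ T, x t = a t) → f x i = a i := by
  classical
  by_contra hcon
  push_neg at hcon
  have hφex : ∀ i : V, ∃ j : V, i ∉ T →
      j ∉ T ∧ ((a j == a i) = true → G.pos j i) ∧ ((a j == a i) = false → G.neg j i) := by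
    intro i
    by_cases hi : i ∈ T
    · exact ⟨i, fun h => absurd hi h⟩
    · obtain ⟨j, hj⟩ := aux_arc G f hf a ha T i (hcon i hi)
      exact ⟨j, fun _ => hj⟩
  choose φ hφ using hφex
  obtain ⟨i₀, hi₀⟩ : ∃ i : V, i ∉ T := by
    by_contra hall
    push_neg at hall
    exact hT (Finset.eq_univ_iff_forall.mpr hall)
  have hstay : ∀ m : ℕ, φ^[m] i₀ ∉ T := by
    intro m
    induction m with
    | zero => simpa using hi₀
    | succ m ih =>
        rw [Function.iterate_succ_apply']
        exact (hφ _ ih).1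
  obtain ⟨m₁, m₂, hlt, heq⟩ : ∃ m₁ m₂ : ℕ, m₁ < m₂ ∧ φ^[m₁] i₀ = φ^[m₂] i₀ := by
    obtain ⟨p, q, hpq, h⟩ := Finite.exists_ne_map_eq_of_infinite (fun m : ℕ => φ^[m] i₀)
    rcases lt_or_gt_of_ne hpq with h' | h'
    · exact ⟨p, q, h', h⟩
    · exact ⟨q, p, h', h.symm⟩
  have hcyc : ∃ k, 0 < k ∧ φ^[k] (φ^[m₁] i₀) = φ^[m₁] i₀ := by
    refine ⟨m₂ - m₁, by omega, ?_⟩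
    rw [← Function.iterate_add_apply, show m₂ - m₁ + m₁ = m₂ by omega]
    exact heq.symm
  set u := φ^[m₁] i₀ with hu
  obtain ⟨hkpos, hku⟩ := Nat.find_spec hcyc
  set k := Nat.find hcyc with hk
  have hkmin : ∀ k', k' < k → ¬(0 < k' ∧ φ^[k'] u = u) := fun k' h => Nat.find_min hcyc h
  have hustay : ∀ m : ℕ, φ^[m] u ∉ T := by
    intro m; rw [hu, ← Function.iterate_add_apply]; exact hstay _
  have hinj : ∀ p, p < k → ∀ q, q < k → φ^[p] u = φ^[q] u → p = q := by
    have key : ∀ p q, p ≤ q → q < k → φ^[p] u = φ^[q] u → p = q := by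
      intro p q hpq hqk h
      by_contra hne
      have h1 : φ^[k - q + p] u = u := by
        rw [Function.iterate_add_apply, h, ← Function.iterate_add_apply,
          show k - q + q = k by omega]
        exact hku
      exact hkmin (k - q + p) (by omega) ⟨by omega, h1⟩
    intro p hp q hq h
    rcases le_total p q with h' | h'
    · exact key p q h' hq h
    · exact (key q p h' hp h.symm).symm
  have harc : ∀ m : ℕ,
      ((a (φ (φ^[m] u)) == a (φ^[m] u)) = true → G.pos (φ (φ^[m] u)) (φ^[m] u)) ∧
      ((a (φ (φ^[m] u)) == a (φ^[m] u)) = false → G.neg (φ (φ^[m] u)) (φ^[m] u)) :=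
    fun m => ⟨(hφ _ (hustay m)).2.1, (hφ _ (hustay m)).2.2⟩
  have hcycle : G.IsCycle u (cycSteps a φ u k) := by
    refine ⟨?_, ?_, ?_, ?_⟩
    · have hlen : (cycSteps a φ u k).length = k := by
        unfold cycSteps; rw [List.length_map, List.length_range]
      intro h
      rw [h] at hlen
      simp at hlen
      omega
    · have hw := cycSteps_walk G a φ u harc k
      rwa [hku] at hw
    · obtain ⟨m, hm⟩ : ∃ m, k = m + 1 := ⟨k - 1, by omega⟩
      rw [hm]
      exact cycSteps_end a φ u m
    · exact cycSteps_nodup a φ u k hkpos hinj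
  have hsign := hpos u (cycSteps a φ u k) hcycle
  have htrue : walkSign (cycSteps a φ u k) = true := by
    unfold walkSign
    rw [cycSteps_fold, hku]
    simp
  rw [hsign] at htrue
  exact Bool.false_ne_true htrue

end Statement19Aux

/-- Proposition 8 of the paper. Let `G` be a signed digraph on `n`
vertices without positive cycles, and let `f` be a Boolean network on `G` having a
fixed point. Then `f` has a synchronizing word of length `n`. -/
theorem statement19 {V : Type} [Fintype V] [DecidableEq V]
    (G : SignedDigraph V) (n : ℕ) (hn : Fintype.card V = n)
    (hpos : G.NoPositiveCycle)
    (f : (V → Bool) → V → Bool) (hf : IsBNOn f G)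
    (hfix : ∃ x : V → Bool, f x = x) :
    ∃ w : List V, w.length = n ∧ SyncWord f w := by
  classical
  obtain ⟨a, hfa⟩ := hfix
  have ha : ∀ i, f a i = a i := fun i => congrFun hfa i
  have key : ∀ m : ℕ, ∀ T : Finset V, Tᶜ.card = m →
      ∃ w : List V, w.length = m ∧ ∀ x : V → Bool, (∀ t ∈ T, x t = a t) →
        wordUpdate f w x = a := by
    intro m
    induction m with
    | zero =>
        intro T hT
        refine ⟨[], rfl, ?_⟩
        intro x hx
        have hTu : ∀ v : V, v ∈ T := by
          intro v
          by_contra h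
          have hv : v ∈ Tᶜ := Finset.mem_compl.mpr h
          rw [Finset.card_eq_zero.mp hT] at hv
          exact absurd hv (Finset.notMem_empty v)
        funext v
        exact hx v (hTu v)
    | succ m ih =>
        intro T hT
        have hTne : T ≠ Finset.univ := by
          intro h
          rw [h] at hT
          simp at hT
        obtain ⟨i, hiT, hi⟩ := aux_exists G hpos f hf a ha T hTne
        have hT' : (insert i T)ᶜ.card = m := by
          rw [Finset.compl_insert, Finset.card_erase_of_mem (Finset.mem_compl.mpr hiT), hT]
          omega
        obtain ⟨w, hw, hwp⟩ := ih (insert i T) hT'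
        refine ⟨i :: w, by rw [List.length_cons, hw], ?_⟩
        intro x hx
        have hstep : wordUpdate f (i :: w) x = wordUpdate f w (localUpdate f i x) := rfl
        rw [hstep]
        apply hwp
        intro t ht
        by_cases hti : t = i
        · subst hti
          simp only [localUpdate, Function.update_self]
          exact hi x hx
        · rcases Finset.mem_insert.mp ht with h' | htT
          · exact absurd h' hti
          · simp only [localUpdate, Function.update_of_ne hti]
            exact hx t htT
  obtain ⟨w, hw, hwp⟩ := key n ∅ (by simp [hn])
  exact ⟨w, hw, a, fun x => hwp x (by simp)⟩
end
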